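/- Let P ⊆ nA* be a finite joinless code and let R = P·(nA*) be the right ideal it generates. Then the following are equivalent: (1) R is an essential right ideal of nA*; (2) P is maximal as a joinless code; (3) P·nA^ω = nA^ω; (4) R·nA^ω = nA^ω. -/

import Mathlib

namespace BrinThompson

abbrev W (A : Type*) (n : ℕ) : Type _ := Fin n → List A

variable {A : Type*} {n : ℕ}

/-- Coordinatewise concatenation in `nA*`. -/
def cat (u x : W A n) : W A n := fun i => u i ++ x i

/-- `u ≤_init v` : `u` is an initial factor of `v`. -/
def initLE (u v : W A n) : Prop := ∃ x : W A n, v = cat u x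

/-- `w` is the join (least upper bound) of `u` and `v` w.r.t. `≤_init`. -/
def isJoin (u v w : W A n) : Prop :=
  initLE u w ∧ initLE v w ∧ ∀ z : W A n, initLE u z → initLE v z → initLE w z

/-- `u` and `v` have a join. -/
def HasJoin (u v : W A n) : Prop := ∃ w : W A n, isJoin u v w

/-- A joinless code: no two distinct elements have a join. -/
def JoinlessCode (S : Set (W A n)) : Prop :=
  ∀ u ∈ S, ∀ v ∈ S, u ≠ v → ¬ HasJoin u v

/-- A maximal joinless code: joinless, and every element of `nA*` has a join
with some element of the code. -/
def MaxJoinlessCode (S : Set (W A n)) : Prop :=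
  JoinlessCode S ∧ ∀ x : W A n, ∃ p ∈ S, HasJoin x p

/-- The right ideal `C · nA*` generated by `C`. -/
def genIdeal (C : Set (W A n)) : Set (W A n) := {w | ∃ c ∈ C, ∃ x : W A n, w = cat c x}

def IsRightIdeal (R : Set (W A n)) : Prop := genIdeal R = R

/-- An initial factor code: pairwise `≤_init`-incomparable set. -/
def InitFactorCode (S : Set (W A n)) : Prop :=
  ∀ u ∈ S, ∀ v ∈ S, initLE u v → u = v

/-- `A_{ε,n}`: tuples with one coordinate a single letter and the rest empty. -/
def Aeps (A : Type*) (n : ℕ) : Set (W A n) :=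
  {w | ∃ i : Fin n, ∃ a : A, w i = [a] ∧ ∀ j : Fin n, j ≠ i → w j = []}

/-- `(ε)^n`, the tuple of empty strings. -/
def epsn (A : Type*) (n : ℕ) : W A n := fun _ => []

/-- `nA^ω`: `n`-tuples of one-sided infinite sequences over `A`. -/
abbrev Winf (A : Type*) (n : ℕ) : Type _ := Fin n → ℕ → A

/-- Concatenation of a finite tuple `p ∈ nA*` with an infinite tuple `u ∈ nA^ω`. -/
def catInf (p : W A n) (u : Winf A n) : Winf A n :=
  fun i k => if h : k < (p i).length then (p i).get ⟨k, h⟩ else u i (k - (p i).length)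

/-- `v` is an interior vertex of the `P`-dag: a strict initial factor of
some element of `P`. -/
def Interior (P : Set (W A n)) (v : W A n) : Prop := ∃ p ∈ P, initLE v p ∧ v ≠ p

/-- The child of `v` in direction `i`, extended by letter `a`. -/
def child (v : W A n) (i : Fin n) (a : A) : W A n := Function.update v i (v i ++ [a])

/-- A leaf of the interior dag of `P`: an interior vertex none of whose
children is interior. -/
def InteriorLeaf (P : Set (W A n)) (v : W A n) : Prop :=
  Interior P v ∧ ∀ (i : Fin n) (a : A), ¬ Interior P (child v i a)

/-- `v_+ = (v · A_{ε,n}) ∩ P`, the set of children of `v` belonging to `P`. -/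
def vplus (P : Set (W A n)) (v : W A n) : Set (W A n) :=
  {w | (∃ (i : Fin n) (a : A), w = child v i a) ∧ w ∈ P}

/-- The depth of a vertex: the sum of the coordinate lengths. -/
def depth (v : W A n) : ℕ := ∑ i, (v i).length

/-- One-step restriction of `P` at `(p, i)`. -/
def oneStep (P : Set (W A n)) (p : W A n) (i : Fin n) : Set (W A n) :=
  (P \ {p}) ∪ {w | ∃ a : A, w = child p i a}

/-- One step in a sequence of one-step restrictions. -/
def RestrStep (P Q : Set (W A n)) : Prop := ∃ p ∈ P, ∃ i : Fin n, Q = oneStep P p i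

/-- The box code `A^{k_1} × … × A^{k_n}`. -/
def box (A : Type*) {n : ℕ} (k : Fin n → ℕ) : Set (W A n) :=
  {w | ∀ i : Fin n, (w i).length = k i}

/-- Elementwise join `P ∨ Q` of two sets, ranging over the joins that exist. -/
def setJoin (P Q : Set (W A n)) : Set (W A n) :=
  {w | ∃ p ∈ P, ∃ q ∈ Q, isJoin p q w}

/-- `ℓ(S)`: the maximum coordinate length occurring in `S`. -/
noncomputable def ell (S : Set (W A n)) : ℕ :=
  sSup {m | ∃ z ∈ S, ∃ i : Fin n, (z i).length = m}

/-- An element of `n RI^fin_A`: an injective right ideal morphism of `nA*`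
whose domain code and image code are finite maximal joinless codes.
`toFun` is a total function whose values outside `Dom` are irrelevant. -/
structure RIMfin (A : Type*) (n : ℕ) where
  Dom : Set (W A n)
  toFun : W A n → W A n
  domC : Set (W A n)
  imC : Set (W A n)
  ideal : IsRightIdeal Dom
  morph : ∀ x ∈ Dom, ∀ w : W A n, toFun (cat x w) = cat (toFun x) w
  inj : Set.InjOn toFun Dom
  domC_gen : genIdeal domC = Dom
  imC_gen : genIdeal imC = toFun '' Dom
  domC_fin : domC.Finite
  domC_max : MaxJoinlessCode domC
  imC_fin : imC.Finite
  imC_max : MaxJoinlessCode imC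

/-- `ℓ(f) = max{ℓ(z) : z ∈ domC(f) ∪ imC(f)}`. -/
noncomputable def ellF (F : RIMfin A n) : ℕ := ell (F.domC ∪ F.imC)

/-- `G` extends `F` (as partial functions). -/
def Extends (F G : RIMfin A n) : Prop :=
  F.Dom ⊆ G.Dom ∧ ∀ x ∈ F.Dom, G.toFun x = F.toFun x

/-- `F` and `G` are equal as partial functions. -/
def EquivRIM (F G : RIMfin A n) : Prop :=
  F.Dom = G.Dom ∧ ∀ x ∈ F.Dom, F.toFun x = G.toFun x

/-- `G` is a maximal extension of `F` in `n RI^fin_A`. -/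
def MaxExtension (F G : RIMfin A n) : Prop :=
  Extends F G ∧ ∀ H : RIMfin A n, Extends G H → EquivRIM G H


/-! Auxiliary lemmas -/

lemma initLE_iff' {u v : W A n} : initLE u v ↔ ∀ i, u i <+: v i := by
  constructor
  · rintro ⟨x, rfl⟩ i; exact ⟨x i, rfl⟩
  · intro h
    refine ⟨fun i => (v i).drop (u i).length, funext fun i => ?_⟩
    obtain ⟨t, ht⟩ := h i
    show v i = u i ++ (v i).drop (u i).length
    rw [← ht, List.drop_left]

lemma hasJoin_of_le' {u v z : W A n} (hu : initLE u z) (hv : initLE v z) :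
    HasJoin u v := by
  rw [initLE_iff'] at hu hv
  refine ⟨fun i => (z i).take (max (u i).length (v i).length), ?_, ?_, ?_⟩
  · rw [initLE_iff']
    intro i
    nth_rw 1 [List.prefix_iff_eq_take.mp (hu i)]
    exact List.take_prefix_take_left (le_max_left _ _)
  · rw [initLE_iff']
    intro i
    nth_rw 1 [List.prefix_iff_eq_take.mp (hv i)]
    exact List.take_prefix_take_left (le_max_right _ _)
  · intro y hy1 hy2
    rw [initLE_iff'] at hy1 hy2 ⊢
    intro i
    rcases le_total (u i).length (v i).length with h | h
    · rw [Nat.max_eq_right h, ← List.prefix_iff_eq_take.mp (hv i)]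
      exact hy2 i
    · rw [Nat.max_eq_left h, ← List.prefix_iff_eq_take.mp (hu i)]
      exact hy1 i

/-- `p` agrees with the infinite word `w` on all of its letters. -/
def Agrees (p : W A n) (w : Winf A n) : Prop :=
  ∀ (i : Fin n) (k : ℕ) (h : k < (p i).length), (p i)[k] = w i k

lemma catInf_iff {p : W A n} {w : Winf A n} :
    (∃ u : Winf A n, w = catInf p u) ↔ Agrees p w := by
  constructor
  · rintro ⟨u, rfl⟩ i k h
    simp [catInf, h]
  · intro h
    refine ⟨fun i k => w i (k + (p i).length), funext fun i => funext fun k => ?_⟩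
    by_cases hk : k < (p i).length
    · simp only [catInf, dif_pos hk, List.get_eq_getElem]
      exact (h i k hk).symm
    · simp only [catInf, dif_neg hk]
      congr 1
      omega

lemma prefix_ofFn' {l : List A} {w : ℕ → A} {m : ℕ}
    (h : ∀ (k : ℕ) (hk : k < l.length), l[k] = w k) (hm : l.length ≤ m) :
    l <+: List.ofFn (fun k : Fin m => w k) := by
  rw [List.prefix_iff_eq_take]
  apply List.ext_getElem
  · simp [Nat.min_eq_left hm]
  · intro k h1 h2
    rw [List.getElem_take, List.getElem_ofFn]
    exact h k h1

/-- For a finite joinless code `P` generating the right ideal `R = P·nA*`,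
the following are equivalent: (1) `R` is essential; (2) `P` is a maximal
joinless code; (3) `P·nA^ω = nA^ω`; (4) `R·nA^ω = nA^ω`. -/
theorem joinless_essential_tfae {A : Type*} [Fintype A] [Nonempty A]
    {n : ℕ} (hn : 1 ≤ n) (P : Set (W A n)) (hfin : P.Finite)
    (hjl : JoinlessCode P) :
    List.TFAE
      [∀ x : W A n, (genIdeal {x} ∩ genIdeal P).Nonempty,
       MaxJoinlessCode P,
       ∀ w : Winf A n, ∃ p ∈ P, ∃ u : Winf A n, w = catInf p u,
       ∀ w : Winf A n, ∃ r ∈ genIdeal P, ∃ u : Winf A n, w = catInf r u] := by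
  have hbound : ∃ L : ℕ, ∀ p ∈ P, ∀ i : Fin n, (p i).length ≤ L := by
    obtain ⟨L, hL⟩ := (hfin.image depth).bddAbove
    refine ⟨L, fun p hp i => le_trans ?_ (hL (Set.mem_image_of_mem _ hp))⟩
    exact Finset.single_le_sum (f := fun j => (p j).length)
      (fun _ _ => Nat.zero_le _) (Finset.mem_univ i)
  tfae_have 1 → 2 := by
    intro h1
    refine ⟨hjl, fun x => ?_⟩
    obtain ⟨y, ⟨x', hx', s, hs⟩, ⟨p, hp, t, ht⟩⟩ := h1 x
    obtain rfl : x' = x := hx'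
    exact ⟨p, hp, hasJoin_of_le' ⟨s, hs⟩ ⟨t, ht⟩⟩
  tfae_have 2 → 1 := by
    intro h2 x
    obtain ⟨p, hp, w, ⟨s, hs⟩, ⟨t, ht⟩, -⟩ := h2.2 x
    exact ⟨w, ⟨x, rfl, s, hs⟩, ⟨p, hp, t, ht⟩⟩
  tfae_have 1 → 3 := by
    intro h1 w
    obtain ⟨L, hL⟩ := hbound
    set x : W A n := fun i => List.ofFn (fun k : Fin L => w i k) with hx
    obtain ⟨y, ⟨x', hx', s, hs⟩, ⟨p, hp, t, ht⟩⟩ := h1 x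
    obtain rfl : x' = x := hx'
    refine ⟨p, hp, catInf_iff.mpr ?_⟩
    have hlen : ∀ i, (p i).length ≤ (x i).length := by
      intro i
      simpa [hx] using hL p hp i
    have hpx : ∀ i, p i <+: x i := by
      intro i
      have h1' : p i <+: y i := ⟨t i, (congrFun ht i).symm⟩
      have h2' : x i <+: y i := ⟨s i, (congrFun hs i).symm⟩
      exact List.prefix_of_prefix_length_le h1' h2' (hlen i)
    intro i k hk
    rw [(hpx i).getElem hk]
    have hkL : k < L := lt_of_lt_of_le hk (by simpa [hx] using hL p hp i)
    simp [hx]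
  tfae_have 3 → 1 := by
    intro h3 x
    have a : A := Classical.arbitrary A
    set w : Winf A n := fun i k => (x i).getD k a with hw
    obtain ⟨p, hp, u, hu⟩ := h3 w
    have hpw : Agrees p w := catInf_iff.mp ⟨u, hu⟩
    have hxw : Agrees x w := by
      intro i k hk
      show (x i)[k] = (x i).getD k a
      exact (List.getD_eq_getElem _ _ hk).symm
    set z : W A n := fun i =>
      List.ofFn (fun k : Fin (max (x i).length (p i).length) => w i k) with hz
    have hxz : initLE x z := by
      rw [initLE_iff']
      intro i
      exact prefix_ofFn' (fun k hk => hxw i k hk) (le_max_left _ _)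
    have hpz : initLE p z := by
      rw [initLE_iff']
      intro i
      exact prefix_ofFn' (fun k hk => hpw i k hk) (le_max_right _ _)
    obtain ⟨s, hs⟩ := hxz
    obtain ⟨t, ht⟩ := hpz
    exact ⟨z, ⟨x, rfl, s, hs⟩, ⟨p, hp, t, ht⟩⟩
  tfae_have 3 → 4 := by
    intro h3 w
    obtain ⟨p, hp, u, hu⟩ := h3 w
    exact ⟨p, ⟨p, hp, epsn A n, funext fun i => (List.append_nil _).symm⟩, u, hu⟩
  tfae_have 4 → 3 := by
    intro h4 w
    obtain ⟨r, ⟨p, hp, s, hr⟩, u, hu⟩ := h4 w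
    subst hr
    have hrw : Agrees (cat p s) w := catInf_iff.mp ⟨u, hu⟩
    refine ⟨p, hp, catInf_iff.mpr ?_⟩
    intro i k hk
    have hk2 : k < ((cat p s) i).length := by
      show k < (p i ++ s i).length
      rw [List.length_append]
      omega
    have h := hrw i k hk2
    rw [← h]
    exact (List.getElem_append_left hk).symm
  tfae_finish

end BrinThompson
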